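/- Let σ' be a prefix normal word chain generator of length n with σ'(i) = n for some i with 2 ≤ i ≤ n−1. Then the permutation σ obtained from σ' by swapping the values at positions i−1 and i (moving the entry n one step to the left) is also a prefix normal word chain generator. -/

import Mathlib

set_option maxHeartbeats 1000000

/-- A binary word (list of booleans, `true` = letter 1) is prefix normal if every
factor has at most as many 1s as the prefix of the same length. -/
def prefixNormal (w : List Bool) : Prop :=
  ∀ v : List Bool, v <:+: w → v.count true ≤ (w.take v.length).count true

/-- The word chain of a permutation σ of positions (0-indexed): `pnChain σ 0 = 1^n`
and `pnChain σ (k+1)` flips position `σ k` of `pnChain σ k` from 1 to 0.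
(`pnChain σ k` corresponds to the paper's `c_σ[k+1]`.) -/
def pnChain {n : ℕ} (σ : Equiv.Perm (Fin n)) : ℕ → List Bool
  | 0 => List.replicate n true
  | k + 1 => if h : k < n then (pnChain σ k).set (σ ⟨k, h⟩) false else pnChain σ k

/-- σ is a prefix normal word chain generator iff every word of its chain is prefix normal. -/
def isPNGen {n : ℕ} (σ : Equiv.Perm (Fin n)) : Prop :=
  ∀ k ≤ n, prefixNormal (pnChain σ k)

lemma pnChain_length {n : ℕ} (σ : Equiv.Perm (Fin n)) (j : ℕ) :
    (pnChain σ j).length = n := by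
  induction j with
  | zero => simp [pnChain]
  | succ j ih => rw [pnChain]; split <;> simp [ih]

lemma take_set_of_le {α : Type*} (w : List α) (m l : ℕ) (a : α) (h : l ≤ m) :
    (w.set m a).take l = w.take l := by
  by_cases hm : m < w.length
  · rw [List.set_eq_take_cons_drop a hm, List.take_append_of_le_length (by simp; omega),
      List.take_take, Nat.min_eq_left h]
  · rw [List.set_eq_of_length_le (by omega)]

/-- Setting the last position of a prefix normal word to 0 preserves prefix normality. -/
lemma prefixNormal_set_last {w : List Bool} (h : prefixNormal w) {m : ℕ}
    (hm : m + 1 = w.length) : prefixNormal (w.set m false) := by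
  have hset : w.set m false = w.take m ++ [false] := by
    rw [List.set_eq_take_cons_drop false (by omega)]
    have : w.drop (m + 1) = [] := by
      apply List.drop_eq_nil_of_le; omega
    rw [this]
  have hmlen : (w.take m).length = m := by simp; omega
  intro v hv
  obtain ⟨s, t, hst⟩ := hv
  rcases t.eq_nil_or_concat with rfl | ⟨t', c, rfl⟩
  · -- v is a suffix of w.set m false
    rcases v.eq_nil_or_concat with rfl | ⟨v', c, rfl⟩
    · simp
    · simp only [List.concat_eq_append] at hst ⊢
      rw [hset] at hst
      simp only [List.append_nil] at hst
      have hst' : (s ++ v') ++ [c] = w.take m ++ [false] := by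
        simpa [List.append_assoc] using hst
      obtain ⟨hsv, hc⟩ := List.append_inj' hst' rfl
      have hc' : c = false := by simpa using hc
      subst hc'
      have hv'inf : v' <:+: w := by
        refine List.IsInfix.trans ?_ (List.take_prefix m w).isInfix
        exact ⟨s, [], by simp [hsv]⟩
      have hcount := h v' hv'inf
      have hlen : v'.length ≤ m := by
        have := congrArg List.length hsv
        simp at this
        omega
      have hcount2 : (w.take v'.length).count true
          ≤ ((w.set m false).take (v' ++ [false]).length).count true := by
        rw [show (v' ++ [false]).length = v'.length + 1 by simp]
        rw [← take_set_of_le w m v'.length false hlen]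
        exact (List.take_prefix_take_left (l := w.set m false) (j := v'.length + 1) (by omega)).count_le true
      calc (v' ++ [false]).count true = v'.count true := by simp
        _ ≤ (w.take v'.length).count true := hcount
        _ ≤ _ := hcount2
  · -- t ends with [c]; then v is an infix of w.take m
    simp only [List.concat_eq_append] at hst
    rw [hset] at hst
    have hst' : (s ++ v ++ t') ++ [c] = w.take m ++ [false] := by
      simpa [List.append_assoc] using hst
    obtain ⟨hsv, -⟩ := List.append_inj' hst' rfl
    have hvinf : v <:+: w := by
      refine List.IsInfix.trans ⟨s, t', by simpa [List.append_assoc] using hsv⟩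
        (List.take_prefix m w).isInfix
    have hlen : v.length ≤ m := by
      have := congrArg List.length hsv
      simp at this
      omega
    rw [take_set_of_le w m v.length false hlen]
    exact h v hvinf

/-- Moving the largest entry of a prefix normal generator one step to the left
yields again a prefix normal generator. -/
theorem pnGen_shift_max_left {n : ℕ} (σ' : Equiv.Perm (Fin n)) (hσ' : isPNGen σ')
    (k : ℕ) (hk1 : 1 ≤ k) (hk : k + 1 < n)
    (hval : (σ' ⟨k, by omega⟩ : ℕ) = n - 1) :
    isPNGen (σ' * Equiv.swap ⟨k - 1, by omega⟩ ⟨k, by omega⟩) := by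
  obtain ⟨m, rfl⟩ : ∃ m, k = m + 1 := ⟨k - 1, by omega⟩
  set a : Fin n := ⟨m + 1 - 1, by omega⟩ with ha
  set b : Fin n := ⟨m + 1, by omega⟩ with hb
  set σ : Equiv.Perm (Fin n) := σ' * Equiv.swap a b with hσ
  have hab : a ≠ b := by simp [ha, hb, Fin.ext_iff]
  have hσa : σ a = σ' b := by simp [hσ, Equiv.swap_apply_left]
  have hσb : σ b = σ' a := by simp [hσ, Equiv.swap_apply_right]
  have hσother : ∀ x : Fin n, x ≠ a → x ≠ b → σ x = σ' x := by
    intro x hxa hxb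
    simp [hσ, Equiv.swap_apply_of_ne_of_ne hxa hxb]
  have hm1 : m < n := by omega
  have hm2 : m + 1 < n := by omega
  -- chain equality for j ≤ m
  have heq1 : ∀ j ≤ m, pnChain σ j = pnChain σ' j := by
    intro j hj
    induction j with
    | zero => rfl
    | succ j ih =>
      have hjn : j < n := by omega
      rw [pnChain, pnChain, dif_pos hjn, dif_pos hjn, ih (by omega),
        hσother ⟨j, hjn⟩ (by simp [ha, Fin.ext_iff]; omega) (by simp [hb, Fin.ext_iff]; omega)]
  -- pnChain σ at step m+1
  have heqk : pnChain σ (m + 1) = (pnChain σ' m).set (n - 1) false := by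
    rw [pnChain, dif_pos hm1, heq1 m le_rfl]
    congr 1
    have h1 : (⟨m, hm1⟩ : Fin n) = a := rfl
    rw [h1, hσa]
    exact hval
  -- chain equality at m+2
  have heqk1 : pnChain σ (m + 2) = pnChain σ' (m + 2) := by
    have hA : pnChain σ' (m + 2) = ((pnChain σ' m).set (σ' a) false).set (σ' b) false := by
      rw [pnChain, dif_pos hm2, pnChain, dif_pos hm1]
      rfl
    have hB : pnChain σ (m + 2) = ((pnChain σ' m).set (n - 1) false).set (σ' a) false := by
      rw [pnChain, dif_pos hm2, heqk]
      congr 1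
      have h1 : (⟨m + 1, hm2⟩ : Fin n) = b := rfl
      rw [h1, hσb]
    rw [hA, hB]
    have hvb : ((σ' b : Fin n) : ℕ) = n - 1 := hval
    rw [← hvb]
    apply List.set_comm
    intro hcontra
    exact hab (σ'.injective (Fin.ext hcontra.symm))
  have heq2 : ∀ j, m + 2 ≤ j → pnChain σ j = pnChain σ' j := by
    intro j hj
    induction j with
    | zero => omega
    | succ j ih =>
      rcases Nat.lt_or_ge (m + 2) (j + 1) with h1 | h1
      · rw [pnChain, pnChain]
        rcases Nat.lt_or_ge j n with hjn | hjn
        · rw [dif_pos hjn, dif_pos hjn, ih (by omega),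
            hσother ⟨j, hjn⟩ (by simp [ha, Fin.ext_iff]; omega) (by simp [hb, Fin.ext_iff]; omega)]
        · rw [dif_neg (by omega), dif_neg (by omega)]
          exact ih (by omega)
      · have : j + 1 = m + 2 := by omega
        rw [this]; exact heqk1
  -- main
  intro j hj
  rcases Nat.lt_trichotomy j (m + 1) with h1 | h1 | h1
  · rw [heq1 j (by omega)]; exact hσ' j hj
  · subst h1
    rw [heqk]
    exact prefixNormal_set_last (hσ' m (by omega)) (by rw [pnChain_length]; omega)
  · rw [heq2 j (by omega)]; exact hσ' j hj
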